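/- arXiv:1907.01593 — 2 statements merged into one kernel-verified Lean document; each statement's English description precedes it below -/
import Mathlib

section
/- Let δ > 0 be a grid spacing and let i be an integer. For every real u, the scaled cubic basis function u ↦ B³((u − iδ)/δ − 2) is differentiable at u with derivative equal to (1/δ)·(B²((u − iδ)/δ − 3/2) − B²((u − (i+1)δ)/δ − 3/2)); that is, the derivative of the order-3 basis function at knot index i equals (B²_i − B²_{i+1})/δ, where B²_j(u) = B²((u − jδ)/δ − 3/2). -/
/-- The quadratic uniform B-spline. -/
noncomputable def B2 (t : ℝ) : ℝ :=
  if |t| ≤ 1/2 then 3/4 - t^2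
  else if |t| ≤ 3/2 then (1/2) * (3/2 - |t|)^2
  else 0

/-- The cubic uniform B-spline. -/
noncomputable def B3 (t : ℝ) : ℝ :=
  if |t| ≤ 1 then (1/6) * (4 - 3*t^2*(2 - |t|))
  else if |t| ≤ 2 then (1/6) * (2 - |t|)^3
  else 0

noncomputable def tp2 (x : ℝ) : ℝ := (max x 0)^2
noncomputable def tp3 (x : ℝ) : ℝ := (max x 0)^3

lemma tp2_pos {x : ℝ} (h : 0 ≤ x) : tp2 x = x^2 := by rw [tp2, max_eq_left h]
lemma tp2_neg {x : ℝ} (h : x ≤ 0) : tp2 x = 0 := by rw [tp2, max_eq_right h]; ring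
lemma tp3_pos {x : ℝ} (h : 0 ≤ x) : tp3 x = x^3 := by rw [tp3, max_eq_left h]
lemma tp3_neg {x : ℝ} (h : x ≤ 0) : tp3 x = 0 := by rw [tp3, max_eq_right h]; ring

lemma B2_eq (s : ℝ) :
    B2 s = (1/2) * (tp2 (s+3/2) - 3*tp2 (s+1/2) + 3*tp2 (s-1/2) - tp2 (s-3/2)) := by
  rcases le_or_gt 0 s with hs | hs
  · rw [B2, abs_of_nonneg hs]
    split_ifs with h1 h2
    · rw [tp2_pos (by linarith), tp2_pos (by linarith), tp2_neg (by linarith),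
        tp2_neg (by linarith)]; ring
    · push_neg at h1
      rw [tp2_pos (by linarith), tp2_pos (by linarith), tp2_pos (by linarith),
        tp2_neg (by linarith)]; ring
    · push_neg at h1 h2
      rw [tp2_pos (by linarith), tp2_pos (by linarith), tp2_pos (by linarith),
        tp2_pos (by linarith)]; ring
  · rw [B2, abs_of_neg hs]
    split_ifs with h1 h2
    · rw [tp2_pos (by linarith), tp2_pos (by linarith), tp2_neg (by linarith),
        tp2_neg (by linarith)]; ring
    · push_neg at h1
      rw [tp2_pos (by linarith), tp2_neg (by linarith), tp2_neg (by linarith),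
        tp2_neg (by linarith)]; ring
    · push_neg at h1 h2
      rw [tp2_neg (by linarith), tp2_neg (by linarith), tp2_neg (by linarith),
        tp2_neg (by linarith)]; ring

lemma B3_eq (t : ℝ) :
    B3 t = (1/6) * (tp3 (t+2) - 4*tp3 (t+1) + 6*tp3 t - 4*tp3 (t-1) + tp3 (t-2)) := by
  rcases le_or_gt 0 t with ht | ht
  · rw [B3, abs_of_nonneg ht]
    split_ifs with h1 h2
    · rw [tp3_pos (by linarith), tp3_pos (by linarith), tp3_pos (by linarith),
        tp3_neg (by linarith), tp3_neg (by linarith)]; ring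
    · push_neg at h1
      rw [tp3_pos (by linarith), tp3_pos (by linarith), tp3_pos (by linarith),
        tp3_pos (by linarith), tp3_neg (by linarith)]; ring
    · push_neg at h1 h2
      rw [tp3_pos (by linarith), tp3_pos (by linarith), tp3_pos (by linarith),
        tp3_pos (by linarith), tp3_pos (by linarith)]; ring
  · rw [B3, abs_of_neg ht]
    split_ifs with h1 h2
    · rw [tp3_pos (by linarith), tp3_pos (by linarith), tp3_neg (by linarith),
        tp3_neg (by linarith), tp3_neg (by linarith)]; ring
    · push_neg at h1
      rw [tp3_pos (by linarith), tp3_neg (by linarith), tp3_neg (by linarith),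
        tp3_neg (by linarith), tp3_neg (by linarith)]; ring
    · push_neg at h1 h2
      rw [tp3_neg (by linarith), tp3_neg (by linarith), tp3_neg (by linarith),
        tp3_neg (by linarith), tp3_neg (by linarith)]; ring

lemma hasDerivAt_tp3 (x : ℝ) : HasDerivAt tp3 (3 * tp2 x) x := by
  rcases lt_trichotomy x 0 with h | h | h
  · have h0 : HasDerivAt (fun _ : ℝ => (0:ℝ)) 0 x := hasDerivAt_const x 0
    have heq : tp3 =ᶠ[nhds x] (fun _ : ℝ => (0:ℝ)) := by
      filter_upwards [Iio_mem_nhds h] with y hy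
      exact tp3_neg (le_of_lt hy)
    have := h0.congr_of_eventuallyEq heq
    rwa [tp2_neg h.le, mul_zero]
  · subst h
    have hz : (3:ℝ) * tp2 0 = 0 := by rw [tp2_neg le_rfl]; ring
    rw [hz, hasDerivAt_iff_tendsto_slope]
    apply squeeze_zero_norm (a := fun y : ℝ => y^2)
    · intro y
      by_cases hy : y = 0
      · simp [hy, slope]
      · have h1 : (0:ℝ) ≤ max y 0 := le_max_right _ _
        have h2 : max y 0 ≤ |y| := max_le (le_abs_self y) (abs_nonneg y)
        have h3 : tp3 y ≤ |y|^3 := by rw [tp3]; exact pow_le_pow_left₀ h1 h2 3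
        have h4 : 0 ≤ tp3 y := pow_nonneg h1 3
        have h5 : (0:ℝ) < |y| := abs_pos.2 hy
        rw [slope_def_field, tp3_neg le_rfl, sub_zero, sub_zero, Real.norm_eq_abs,
          abs_div, abs_of_nonneg h4, div_le_iff₀ h5]
        nlinarith [sq_abs y, abs_nonneg y]
    · have : Filter.Tendsto (fun y : ℝ => y^2) (nhds 0) (nhds 0) := by
        simpa using (continuous_pow 2).tendsto (0:ℝ)
      exact this.mono_left nhdsWithin_le_nhds
  · have hx3 : HasDerivAt (fun y : ℝ => y^3) (3 * x^2) x := by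
      simpa using hasDerivAt_pow 3 x
    have heq : tp3 =ᶠ[nhds x] (fun y : ℝ => y^3) := by
      filter_upwards [Ioi_mem_nhds h] with y hy
      exact tp3_pos (le_of_lt hy)
    have := hx3.congr_of_eventuallyEq heq
    rwa [tp2_pos h.le]

lemma hasDerivAt_tp3_shift (c t : ℝ) :
    HasDerivAt (fun y : ℝ => tp3 (y + c)) (3 * tp2 (t + c)) t := by
  have h := (hasDerivAt_tp3 (t + c)).comp t ((hasDerivAt_id t).add_const c)
  simpa [Function.comp_def] using h

lemma hasDerivAt_B3 (t : ℝ) : HasDerivAt B3 (B2 (t + 1/2) - B2 (t - 1/2)) t := by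
  have h1 := hasDerivAt_tp3_shift 2 t
  have h2 := hasDerivAt_tp3_shift 1 t
  have h3 := hasDerivAt_tp3_shift 0 t
  have h4 := hasDerivAt_tp3_shift (-1) t
  have h5 := hasDerivAt_tp3_shift (-2) t
  have H := (((((h1.sub (h2.const_mul 4)).add (h3.const_mul 6)).sub
      (h4.const_mul 4)).add h5).const_mul (1/6 : ℝ))
  have Hfun : (fun y : ℝ => (1/6 : ℝ) *
      ((((tp3 (y + 2) - 4 * tp3 (y + 1)) + 6 * tp3 (y + 0)) - 4 * tp3 (y + -1)) + tp3 (y + -2)))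
      = B3 := by
    funext y
    rw [B3_eq y]
    ring_nf
  simp only [Pi.sub_apply, Pi.add_apply] at H
  rw [Hfun] at H
  refine H.congr_deriv ?_
  rw [B2_eq (t + 1/2), B2_eq (t - 1/2)]
  simp only [tp2]
  ring_nf

/-- On a grid of spacing `δ > 0`, the derivative of the order-3 basis function at knot
index `i`, namely `u ↦ B3 ((u - i*δ)/δ - 2)`, exists at every `u` and equals
`(1/δ) * (B2_i u - B2_{i+1} u)` where `B2_j u = B2 ((u - j*δ)/δ - 3/2)`. -/
theorem hasDerivAt_scaled_B3 (δ : ℝ) (hδ : 0 < δ) (i : ℤ) (u : ℝ) :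
    HasDerivAt (fun u' : ℝ => B3 ((u' - (i : ℝ) * δ) / δ - 2))
      ((1/δ) * (B2 ((u - (i : ℝ) * δ) / δ - 3/2)
        - B2 ((u - ((i : ℝ) + 1) * δ) / δ - 3/2))) u := by
  have hδ' : δ ≠ 0 := ne_of_gt hδ
  set t : ℝ := (u - (i : ℝ) * δ) / δ - 2 with ht
  have hg : HasDerivAt (fun u' : ℝ => (u' - (i : ℝ) * δ) / δ - 2) (1/δ) u := by
    have := (((hasDerivAt_id u).sub_const ((i : ℝ) * δ)).div_const δ).sub_const 2
    simpa [one_div] using this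
  have H := (hasDerivAt_B3 t).comp u hg
  have e1 : t + 1/2 = (u - (i : ℝ) * δ) / δ - 3/2 := by rw [ht]; ring
  have e2 : t - 1/2 = (u - ((i : ℝ) + 1) * δ) / δ - 3/2 := by
    rw [ht]; field_simp; ring
  rw [e1, e2] at H
  have : (B2 ((u - (i : ℝ) * δ) / δ - 3/2) - B2 ((u - ((i : ℝ) + 1) * δ) / δ - 3/2)) * (1/δ)
      = (1/δ) * (B2 ((u - (i : ℝ) * δ) / δ - 3/2) - B2 ((u - ((i : ℝ) + 1) * δ) / δ - 3/2)) := by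
    ring
  rw [this] at H
  exact H
end

section
/- Let n > 3 be an integer and let v be the divergence-conforming B-spline velocity field of order 3 with coefficients φ^X, φ^Y, φ^Z satisfying, for every index i = (i_X,i_Y,i_Z) ∈ {−2,…,n−1}³, the linear constraint n·(φ^X(i_X,i_Y,i_Z) − φ^X(i_X−1,i_Y,i_Z)) + n·(φ^Y(i_X,i_Y,i_Z) − φ^Y(i_X,i_Y−1,i_Z)) + n·(φ^Z(i_X,i_Y,i_Z) − φ^Z(i_X,i_Y,i_Z−1)) = 0. Then v is exactly divergence-free at every point of the continuous domain: div v(m) = 0 for every m ∈ [0,1]³. -/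
/-- Order-2 shifted basis function at knot index `j` on the uniform grid of spacing `1/n`. -/
noncomputable def B2j (n : ℤ) (j : ℤ) (u : ℝ) : ℝ :=
  B2 ((n : ℝ) * u - (j : ℝ) - 3/2)

/-- Order-3 shifted basis function at knot index `j` on the uniform grid of spacing `1/n`. -/
noncomputable def B3j (n : ℤ) (j : ℤ) (u : ℝ) : ℝ :=
  B3 ((n : ℝ) * u - (j : ℝ) - 2)

/-- First component of the divergence-conforming B-spline velocity field of order 3. -/
noncomputable def vX (n : ℤ) (φ : ℤ → ℤ → ℤ → ℝ) (x y z : ℝ) : ℝ :=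
  ∑ iX ∈ Finset.Icc (-3 : ℤ) (n-1), ∑ iY ∈ Finset.Icc (-2 : ℤ) (n-1),
    ∑ iZ ∈ Finset.Icc (-2 : ℤ) (n-1),
      B3j n iX x * B2j n iY y * B2j n iZ z * φ iX iY iZ

/-- Second component of the divergence-conforming B-spline velocity field of order 3. -/
noncomputable def vY (n : ℤ) (φ : ℤ → ℤ → ℤ → ℝ) (x y z : ℝ) : ℝ :=
  ∑ iX ∈ Finset.Icc (-2 : ℤ) (n-1), ∑ iY ∈ Finset.Icc (-3 : ℤ) (n-1),
    ∑ iZ ∈ Finset.Icc (-2 : ℤ) (n-1),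
      B2j n iX x * B3j n iY y * B2j n iZ z * φ iX iY iZ

/-- Third component of the divergence-conforming B-spline velocity field of order 3. -/
noncomputable def vZ (n : ℤ) (φ : ℤ → ℤ → ℤ → ℝ) (x y z : ℝ) : ℝ :=
  ∑ iX ∈ Finset.Icc (-2 : ℤ) (n-1), ∑ iY ∈ Finset.Icc (-2 : ℤ) (n-1),
    ∑ iZ ∈ Finset.Icc (-3 : ℤ) (n-1),
      B2j n iX x * B2j n iY y * B3j n iZ z * φ iX iY iZ

/-- The divergence `∂vX/∂x + ∂vY/∂y + ∂vZ/∂z` of the divergence-conforming B-spline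
velocity field at a point `(x, y, z)`. -/
noncomputable def divv (n : ℤ) (φX φY φZ : ℤ → ℤ → ℤ → ℝ) (p : ℝ × ℝ × ℝ) : ℝ :=
  deriv (fun x' : ℝ => vX n φX x' p.2.1 p.2.2) p.1 +
  deriv (fun y' : ℝ => vY n φY p.1 y' p.2.2) p.2.1 +
  deriv (fun z' : ℝ => vZ n φZ p.1 p.2.1 z') p.2.2


lemma B2_zero {t : ℝ} (h : 3/2 ≤ |t|) : B2 t = 0 := by
  rw [B2, if_neg (by linarith)]
  split_ifs with h2
  · have : |t| = 3/2 := le_antisymm h2 h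
    rw [this]; ring
  · rfl

lemma B2_mid {t : ℝ} (h : |t| ≤ 1/2) : B2 t = 3/4 - t^2 := by
  rw [B2, if_pos h]

lemma B2_right {t : ℝ} (h1 : 1/2 ≤ t) (h2 : t ≤ 3/2) : B2 t = (1/2)*(3/2 - t)^2 := by
  have habs : |t| = t := abs_of_nonneg (by linarith)
  rw [B2]
  rcases eq_or_lt_of_le h1 with he | hlt
  · rw [if_pos (by rw [habs, ← he]), ← he]; norm_num
  · rw [if_neg (by rw [habs]; linarith), if_pos (by rw [habs]; linarith), habs]

lemma B2_left {t : ℝ} (h1 : -3/2 ≤ t) (h2 : t ≤ -1/2) : B2 t = (1/2)*(3/2 + t)^2 := by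
  have habs : |t| = -t := abs_of_nonpos (by linarith)
  rw [B2]
  rcases eq_or_lt_of_le h2 with he | hlt
  · rw [if_pos (by rw [habs, he]; norm_num), he]; norm_num
  · rw [if_neg (by rw [habs]; linarith), if_pos (by rw [habs]; linarith), habs]; ring

lemma B3_zero {t : ℝ} (h : 2 ≤ |t|) : B3 t = 0 := by
  rw [B3, if_neg (by linarith)]
  split_ifs with h2
  · have : |t| = 2 := le_antisymm h2 h
    rw [this]; ring
  · rfl

lemma B3_pos1 {t : ℝ} (h1 : 0 ≤ t) (h2 : t ≤ 1) : B3 t = (1/6)*(4 - (6*t^2 - 3*t^3)) := by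
  have habs : |t| = t := abs_of_nonneg h1
  rw [B3, if_pos (by rw [habs]; linarith), habs]; ring

lemma B3_neg1 {t : ℝ} (h1 : -1 ≤ t) (h2 : t ≤ 0) : B3 t = (1/6)*(4 - (6*t^2 + 3*t^3)) := by
  have habs : |t| = -t := abs_of_nonpos h2
  rw [B3, if_pos (by rw [habs]; linarith), habs]; ring

lemma B3_pos2 {t : ℝ} (h1 : 1 ≤ t) (h2 : t ≤ 2) : B3 t = (1/6)*(2 - t)^3 := by
  have habs : |t| = t := abs_of_nonneg (by linarith)
  rw [B3]
  rcases eq_or_lt_of_le h1 with he | hlt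
  · rw [if_pos (by rw [habs, ← he]), ← he]; norm_num
  · rw [if_neg (by rw [habs]; linarith), if_pos (by rw [habs]; linarith), habs]

lemma B3_neg2 {t : ℝ} (h1 : -2 ≤ t) (h2 : t ≤ -1) : B3 t = (1/6)*(2 + t)^3 := by
  have habs : |t| = -t := abs_of_nonpos (by linarith)
  rw [B3]
  rcases eq_or_lt_of_le h2 with he | hlt
  · rw [if_pos (by rw [habs, he]; norm_num), he]; norm_num
  · rw [if_neg (by rw [habs]; linarith), if_pos (by rw [habs]; linarith), habs]; ring

lemma hasDerivAt_of_eq_Ioo {f p : ℝ → ℝ} {a b t d : ℝ} (h1 : a < t) (h2 : t < b)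
    (hp : HasDerivAt p d t) (he : ∀ x ∈ Set.Ioo a b, f x = p x) : HasDerivAt f d t := by
  apply hp.congr_of_eventuallyEq
  filter_upwards [Ioo_mem_nhds h1 h2] with x hx using he x hx

lemma glue_hasDerivAt {f p q : ℝ → ℝ} {a d : ℝ}
    (hp : HasDerivAt p d a) (hq : HasDerivAt q d a)
    (hl : ∀ x ∈ Set.Ioc (a-1) a, f x = p x)
    (hr : ∀ x ∈ Set.Ico a (a+1), f x = q x) : HasDerivAt f d a := by
  have hL : HasDerivWithinAt f d (Set.Iic a) a := by
    have h0 : HasDerivWithinAt p d (Set.Ioc (a-1) a) a := hp.hasDerivWithinAt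
    have h1 : HasDerivWithinAt f d (Set.Ioc (a-1) a) a :=
      h0.congr hl (hl a ⟨by linarith, le_refl a⟩)
    exact h1.mono_of_mem_nhdsWithin (Ioc_mem_nhdsLE (by linarith))
  have hR : HasDerivWithinAt f d (Set.Ici a) a := by
    have h0 : HasDerivWithinAt q d (Set.Ico a (a+1)) a := hq.hasDerivWithinAt
    have h1 : HasDerivWithinAt f d (Set.Ico a (a+1)) a :=
      h0.congr hr (hr a ⟨le_refl a, by linarith⟩)
    exact h1.mono_of_mem_nhdsWithin (Ico_mem_nhdsGE (by linarith))
  have := hL.union hR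
  rwa [Set.Iic_union_Ici, hasDerivWithinAt_univ] at this

lemma hasDerivAt_p1 (s : ℝ) : HasDerivAt (fun x:ℝ => (1/6)*(2+x)^3) ((1/2)*(2+s)^2) s := by
  have h := (((hasDerivAt_id s).const_add 2).pow 3).const_mul (1/6 : ℝ)
  refine h.congr_deriv ?_; simp [id]; ring

lemma hasDerivAt_p2 (s : ℝ) : HasDerivAt (fun x:ℝ => (1/6)*(4 - (6*x^2 + 3*x^3)))
    (-(2*s) - (3/2)*s^2) s := by
  have h := ((((hasDerivAt_pow 2 s).const_mul (6:ℝ)).add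
    ((hasDerivAt_pow 3 s).const_mul (3:ℝ))).const_sub 4).const_mul (1/6 : ℝ)
  refine h.congr_deriv ?_; push_cast; ring

lemma hasDerivAt_p3 (s : ℝ) : HasDerivAt (fun x:ℝ => (1/6)*(4 - (6*x^2 - 3*x^3)))
    (-(2*s) + (3/2)*s^2) s := by
  have h := ((((hasDerivAt_pow 2 s).const_mul (6:ℝ)).sub
    ((hasDerivAt_pow 3 s).const_mul (3:ℝ))).const_sub 4).const_mul (1/6 : ℝ)
  refine h.congr_deriv ?_; push_cast; ring

lemma hasDerivAt_p4 (s : ℝ) : HasDerivAt (fun x:ℝ => (1/6)*(2-x)^3) (-((1/2)*(2-s)^2)) s := by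
  have h := (((hasDerivAt_id s).const_sub 2).pow 3).const_mul (1/6 : ℝ)
  refine h.congr_deriv ?_; simp [id]; ring

lemma B3_hasDerivAt (t : ℝ) : HasDerivAt B3 (B2 (t+1/2) - B2 (t-1/2)) t := by
  rcases lt_trichotomy t (-2) with h | h | h
  · -- t < -2
    refine hasDerivAt_of_eq_Ioo (p := fun _ => 0) (a := t-1) (b := -2) (by linarith) h ?_ ?_
    · have e1 : B2 (t+1/2) = 0 := B2_zero (by rw [abs_of_nonpos (by linarith)]; linarith)
      have e2 : B2 (t-1/2) = 0 := B2_zero (by rw [abs_of_nonpos (by linarith)]; linarith)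
      rw [e1, e2]; simpa using hasDerivAt_const t (0:ℝ)
    · intro x hx
      exact B3_zero (by rw [abs_of_nonpos (by linarith [hx.2])]; linarith [hx.2])
  · -- t = -2
    subst h
    have hd : B2 ((-2:ℝ)+1/2) - B2 ((-2:ℝ)-1/2) = 0 := by
      rw [B2_zero (t := (-2:ℝ)+1/2) (by norm_num [abs]),
          B2_zero (t := (-2:ℝ)-1/2) (by norm_num [abs])]
      ring
    rw [hd]
    refine glue_hasDerivAt (p := fun _ => 0) (q := fun x => (1/6)*(2+x)^3)
      (hasDerivAt_const _ _) ?_ ?_ ?_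
    · have := hasDerivAt_p1 (-2); convert this using 1; norm_num
    · intro x hx; exact B3_zero (by rw [abs_of_nonpos (by linarith [hx.2])]; linarith [hx.2])
    · intro x hx; exact B3_neg2 hx.1 (by linarith [hx.2])
  rcases lt_trichotomy t (-1) with h' | h' | h'
  · -- -2 < t < -1
    refine hasDerivAt_of_eq_Ioo (p := fun x => (1/6)*(2+x)^3) (a := -2) (b := -1) h h' ?_ ?_
    · have e1 : B2 (t+1/2) = (1/2)*(3/2 + (t+1/2))^2 := B2_left (by linarith) (by linarith)
      have e2 : B2 (t-1/2) = 0 := B2_zero (by rw [abs_of_nonpos (by linarith)]; linarith)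
      rw [e1, e2]
      have := hasDerivAt_p1 t; convert this using 1; ring
    · intro x hx; exact B3_neg2 (le_of_lt hx.1) (le_of_lt hx.2)
  · -- t = -1
    subst h'
    have hd : B2 ((-1:ℝ)+1/2) - B2 ((-1:ℝ)-1/2) = 1/2 := by
      rw [B2_mid (t := (-1:ℝ)+1/2) (by norm_num [abs]),
          B2_zero (t := (-1:ℝ)-1/2) (by norm_num [abs])]
      norm_num
    rw [hd]
    refine glue_hasDerivAt (p := fun x => (1/6)*(2+x)^3)
      (q := fun x => (1/6)*(4 - (6*x^2 + 3*x^3))) ?_ ?_ ?_ ?_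
    · have := hasDerivAt_p1 (-1); convert this using 1; norm_num
    · have := hasDerivAt_p2 (-1); convert this using 1; norm_num
    · intro x hx; exact B3_neg2 (by linarith [hx.1]) hx.2
    · intro x hx; exact B3_neg1 hx.1 (by linarith [hx.2])
  rcases lt_trichotomy t 0 with h'' | h'' | h''
  · -- -1 < t < 0
    refine hasDerivAt_of_eq_Ioo (p := fun x => (1/6)*(4 - (6*x^2 + 3*x^3))) (a := -1) (b := 0) h' h'' ?_ ?_
    · have e1 : B2 (t+1/2) = 3/4 - (t+1/2)^2 := B2_mid (abs_le.2 ⟨by linarith, by linarith⟩)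
      have e2 : B2 (t-1/2) = (1/2)*(3/2 + (t-1/2))^2 := B2_left (by linarith) (by linarith)
      rw [e1, e2]
      have := hasDerivAt_p2 t; convert this using 1; ring
    · intro x hx; exact B3_neg1 (le_of_lt hx.1) (le_of_lt hx.2)
  · -- t = 0
    subst h''
    have hd : B2 ((0:ℝ)+1/2) - B2 ((0:ℝ)-1/2) = 0 := by
      rw [B2_mid (t := (0:ℝ)+1/2) (by norm_num [abs]),
          B2_mid (t := (0:ℝ)-1/2) (by norm_num [abs])]
      norm_num
    rw [hd]
    refine glue_hasDerivAt (p := fun x => (1/6)*(4 - (6*x^2 + 3*x^3)))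
      (q := fun x => (1/6)*(4 - (6*x^2 - 3*x^3))) ?_ ?_ ?_ ?_
    · have := hasDerivAt_p2 0; convert this using 1; norm_num
    · have := hasDerivAt_p3 0; convert this using 1; norm_num
    · intro x hx; exact B3_neg1 (by linarith [hx.1]) hx.2
    · intro x hx; exact B3_pos1 hx.1 (by linarith [hx.2])
  rcases lt_trichotomy t 1 with h3 | h3 | h3
  · -- 0 < t < 1
    refine hasDerivAt_of_eq_Ioo (p := fun x => (1/6)*(4 - (6*x^2 - 3*x^3))) (a := 0) (b := 1) h'' h3 ?_ ?_
    · have e1 : B2 (t+1/2) = (1/2)*(3/2 - (t+1/2))^2 := B2_right (by linarith) (by linarith)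
      have e2 : B2 (t-1/2) = 3/4 - (t-1/2)^2 := B2_mid (abs_le.2 ⟨by linarith, by linarith⟩)
      rw [e1, e2]
      have := hasDerivAt_p3 t; convert this using 1; ring
    · intro x hx; exact B3_pos1 (le_of_lt hx.1) (le_of_lt hx.2)
  · -- t = 1
    subst h3
    have hd : B2 ((1:ℝ)+1/2) - B2 ((1:ℝ)-1/2) = -(1/2) := by
      rw [B2_zero (t := (1:ℝ)+1/2) (by norm_num [abs]),
          B2_mid (t := (1:ℝ)-1/2) (by norm_num [abs])]
      norm_num
    rw [hd]
    refine glue_hasDerivAt (p := fun x => (1/6)*(4 - (6*x^2 - 3*x^3)))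
      (q := fun x => (1/6)*(2-x)^3) ?_ ?_ ?_ ?_
    · have := hasDerivAt_p3 1; convert this using 1; norm_num
    · have := hasDerivAt_p4 1; convert this using 1; norm_num
    · intro x hx; exact B3_pos1 (by linarith [hx.1]) hx.2
    · intro x hx; exact B3_pos2 hx.1 (by linarith [hx.2])
  rcases lt_trichotomy t 2 with h4 | h4 | h4
  · -- 1 < t < 2
    refine hasDerivAt_of_eq_Ioo (p := fun x => (1/6)*(2-x)^3) (a := 1) (b := 2) h3 h4 ?_ ?_
    · have e1 : B2 (t+1/2) = 0 := B2_zero (by rw [abs_of_nonneg (by linarith)]; linarith)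
      have e2 : B2 (t-1/2) = (1/2)*(3/2 - (t-1/2))^2 := B2_right (by linarith) (by linarith)
      rw [e1, e2]
      have := hasDerivAt_p4 t; convert this using 1; ring
    · intro x hx; exact B3_pos2 (le_of_lt hx.1) (le_of_lt hx.2)
  · -- t = 2
    subst h4
    have hd : B2 ((2:ℝ)+1/2) - B2 ((2:ℝ)-1/2) = 0 := by
      rw [B2_zero (t := (2:ℝ)+1/2) (by norm_num [abs]),
          B2_zero (t := (2:ℝ)-1/2) (by norm_num [abs])]
      ring
    rw [hd]
    refine glue_hasDerivAt (p := fun x => (1/6)*(2-x)^3) (q := fun _ => 0)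
      ?_ (hasDerivAt_const _ _) ?_ ?_
    · have := hasDerivAt_p4 2; convert this using 1; norm_num
    · intro x hx; exact B3_pos2 (by linarith [hx.1]) hx.2
    · intro x hx; exact B3_zero (by rw [abs_of_nonneg (by linarith [hx.1])]; linarith [hx.1])
  · -- 2 < t
    refine hasDerivAt_of_eq_Ioo (p := fun _ => 0) (a := 2) (b := t+1) h4 (by linarith) ?_ ?_
    · have e1 : B2 (t+1/2) = 0 := B2_zero (by rw [abs_of_nonneg (by linarith)]; linarith)
      have e2 : B2 (t-1/2) = 0 := B2_zero (by rw [abs_of_nonneg (by linarith)]; linarith)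
      rw [e1, e2]; simpa using hasDerivAt_const t (0:ℝ)
    · intro x hx
      exact B3_zero (by rw [abs_of_nonneg (by linarith [hx.1])]; linarith [hx.1])


lemma B3j_hasDerivAt (n j : ℤ) (u : ℝ) :
    HasDerivAt (B3j n j) ((n:ℝ) * (B2j n j u - B2j n (j+1) u)) u := by
  have hin : HasDerivAt (fun u : ℝ => (n:ℝ) * u - (j:ℝ) - 2) ((n:ℝ)) u := by
    simpa using (((hasDerivAt_id u).const_mul (n:ℝ)).sub_const (j:ℝ)).sub_const 2
  have h := (B3_hasDerivAt ((n:ℝ) * u - (j:ℝ) - 2)).comp u hin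
  have e1 : (n:ℝ) * u - (j:ℝ) - 2 + 1/2 = (n:ℝ) * u - (j:ℝ) - 3/2 := by ring
  have e2 : (n:ℝ) * u - (j:ℝ) - 2 - 1/2 = (n:ℝ) * u - ((j:ℝ)+1) - 3/2 := by ring
  rw [e1, e2] at h
  have : B3j n j = fun x => B3 ((n:ℝ) * x - (j:ℝ) - 2) := rfl
  rw [this]
  refine h.congr_deriv ?_
  rw [B2j, B2j]
  push_cast
  ring

lemma B2j_neg3 {n : ℤ} (hn : 0 < n) {x : ℝ} (hx : 0 ≤ x) : B2j n (-3) x = 0 := by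
  have hnx : 0 ≤ (n:ℝ) * x := mul_nonneg (by exact_mod_cast hn.le) hx
  rw [B2j]
  apply B2_zero
  rw [abs_of_nonneg (by push_cast; linarith)]
  push_cast; linarith

lemma B2j_n {n : ℤ} (hn : 0 < n) {x : ℝ} (hx : x ≤ 1) : B2j n n x = 0 := by
  have hnx : (n:ℝ) * x ≤ (n:ℝ) := by
    nlinarith [show (0:ℝ) < (n:ℝ) by exact_mod_cast hn]
  rw [B2j]
  apply B2_zero
  rw [abs_of_nonpos (by linarith)]
  linarith

lemma abel_sum (n : ℤ) (hn : 3 < n) (f a : ℤ → ℝ) (hf1 : f (-3) = 0) (hf2 : f n = 0) :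
    ∑ j ∈ Finset.Icc (-3:ℤ) (n-1), (f j - f (j+1)) * a j
      = ∑ j ∈ Finset.Icc (-2:ℤ) (n-1), f j * (a j - a (j-1)) := by
  have key1 : ∑ j ∈ Finset.Icc (-2:ℤ) (n-1), f j * a j
      = ∑ j ∈ Finset.Icc (-3:ℤ) (n-1), f j * a j := by
    apply Finset.sum_subset (Finset.Icc_subset_Icc (by omega) le_rfl)
    intro x hx hnx
    simp only [Finset.mem_Icc] at hx hnx
    have : x = -3 := by omega
    rw [this, hf1, zero_mul]
  have key2 : ∑ j ∈ Finset.Icc (-3:ℤ) (n-1), f (j+1) * a j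
      = ∑ j ∈ Finset.Icc (-2:ℤ) n, f j * a (j-1) := by
    apply Finset.sum_nbij' (fun j => j + 1) (fun j => j - 1)
    · intro x hx; simp only [Finset.mem_Icc] at *; omega
    · intro x hx; simp only [Finset.mem_Icc] at *; omega
    · intro x _; omega
    · intro x _; omega
    · intro x _; simp
  have key3 : ∑ j ∈ Finset.Icc (-2:ℤ) (n-1), f j * a (j-1)
      = ∑ j ∈ Finset.Icc (-2:ℤ) n, f j * a (j-1) := by
    apply Finset.sum_subset (Finset.Icc_subset_Icc le_rfl (by omega))
    intro x hx hnx
    simp only [Finset.mem_Icc] at hx hnx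
    have : x = n := by omega
    rw [this, hf2, zero_mul]
  have expand : ∑ j ∈ Finset.Icc (-3:ℤ) (n-1), (f j - f (j+1)) * a j
      = ∑ j ∈ Finset.Icc (-3:ℤ) (n-1), f j * a j
        - ∑ j ∈ Finset.Icc (-3:ℤ) (n-1), f (j+1) * a j := by
    rw [← Finset.sum_sub_distrib]
    exact Finset.sum_congr rfl fun j _ => sub_mul _ _ _
  rw [expand, ← key1, key2, ← key3, ← Finset.sum_sub_distrib]
  exact Finset.sum_congr rfl fun j _ => (mul_sub _ _ _).symm


/-- If the coefficients of a divergence-conforming B-spline velocity field of order 3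
satisfy the sparse linear constraints
`n(φX_i - φX_{i-eX}) + n(φY_i - φY_{i-eY}) + n(φZ_i - φZ_{i-eZ}) = 0` for all indices
`i ∈ {-2,…,n-1}³`, then the velocity field is exactly divergence-free at every point of
the continuous domain `[0,1]³`. -/
theorem divergence_free_of_linear_constraints (n : ℤ) (hn : 3 < n)
    (φX φY φZ : ℤ → ℤ → ℤ → ℝ)
    (hφX : ∀ iX iY iZ : ℤ,
      ¬(iX ∈ Finset.Icc (-3 : ℤ) (n-1) ∧ iY ∈ Finset.Icc (-2 : ℤ) (n-1) ∧
        iZ ∈ Finset.Icc (-2 : ℤ) (n-1)) → φX iX iY iZ = 0)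
    (hφY : ∀ iX iY iZ : ℤ,
      ¬(iX ∈ Finset.Icc (-2 : ℤ) (n-1) ∧ iY ∈ Finset.Icc (-3 : ℤ) (n-1) ∧
        iZ ∈ Finset.Icc (-2 : ℤ) (n-1)) → φY iX iY iZ = 0)
    (hφZ : ∀ iX iY iZ : ℤ,
      ¬(iX ∈ Finset.Icc (-2 : ℤ) (n-1) ∧ iY ∈ Finset.Icc (-2 : ℤ) (n-1) ∧
        iZ ∈ Finset.Icc (-3 : ℤ) (n-1)) → φZ iX iY iZ = 0)
    (hcon : ∀ iX iY iZ : ℤ, iX ∈ Finset.Icc (-2 : ℤ) (n-1) →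
      iY ∈ Finset.Icc (-2 : ℤ) (n-1) → iZ ∈ Finset.Icc (-2 : ℤ) (n-1) →
      (n : ℝ) * (φX iX iY iZ - φX (iX - 1) iY iZ) +
      (n : ℝ) * (φY iX iY iZ - φY iX (iY - 1) iZ) +
      (n : ℝ) * (φZ iX iY iZ - φZ iX iY (iZ - 1)) = 0) :
    ∀ m ∈ Set.Icc (0:ℝ) 1 ×ˢ (Set.Icc (0:ℝ) 1 ×ˢ Set.Icc (0:ℝ) 1),
      divv n φX φY φZ m = 0 := by

  rintro ⟨x, y, z⟩ ⟨hx, hy, hz⟩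
  have hn0 : (0:ℤ) < n := by omega
  have hdivv : divv n φX φY φZ (x, y, z)
      = deriv (fun x' => vX n φX x' y z) x + deriv (fun y' => vY n φY x y' z) y
        + deriv (fun z' => vZ n φZ x y z') z := rfl
  -- derivatives via HasDerivAt
  have hDX : HasDerivAt (fun x' => vX n φX x' y z)
      (∑ iX ∈ Finset.Icc (-3:ℤ) (n-1), ∑ iY ∈ Finset.Icc (-2:ℤ) (n-1),
        ∑ iZ ∈ Finset.Icc (-2:ℤ) (n-1),
          ((n:ℝ) * (B2j n iX x - B2j n (iX+1) x)) * B2j n iY y * B2j n iZ z * φX iX iY iZ) x := by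
    simp only [vX]
    refine HasDerivAt.fun_sum fun iX _ => HasDerivAt.fun_sum fun iY _ => HasDerivAt.fun_sum fun iZ _ => ?_
    exact (((B3j_hasDerivAt n iX x).mul_const _).mul_const _).mul_const _
  have hDY : HasDerivAt (fun y' => vY n φY x y' z)
      (∑ iX ∈ Finset.Icc (-2:ℤ) (n-1), ∑ iY ∈ Finset.Icc (-3:ℤ) (n-1),
        ∑ iZ ∈ Finset.Icc (-2:ℤ) (n-1),
          B2j n iX x * ((n:ℝ) * (B2j n iY y - B2j n (iY+1) y)) * B2j n iZ z * φY iX iY iZ) y := by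
    simp only [vY]
    refine HasDerivAt.fun_sum fun iX _ => HasDerivAt.fun_sum fun iY _ => HasDerivAt.fun_sum fun iZ _ => ?_
    exact ((((B3j_hasDerivAt n iY y).const_mul _).mul_const _).mul_const _)
  have hDZ : HasDerivAt (fun z' => vZ n φZ x y z')
      (∑ iX ∈ Finset.Icc (-2:ℤ) (n-1), ∑ iY ∈ Finset.Icc (-2:ℤ) (n-1),
        ∑ iZ ∈ Finset.Icc (-3:ℤ) (n-1),
          B2j n iX x * B2j n iY y * ((n:ℝ) * (B2j n iZ z - B2j n (iZ+1) z)) * φZ iX iY iZ) z := by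
    simp only [vZ]
    refine HasDerivAt.fun_sum fun iX _ => HasDerivAt.fun_sum fun iY _ => HasDerivAt.fun_sum fun iZ _ => ?_
    exact (((B3j_hasDerivAt n iZ z).const_mul _).mul_const _)
  rw [hdivv, hDX.deriv, hDY.deriv, hDZ.deriv]
  -- transform the X-sum
  have tX : (∑ iX ∈ Finset.Icc (-3:ℤ) (n-1), ∑ iY ∈ Finset.Icc (-2:ℤ) (n-1),
        ∑ iZ ∈ Finset.Icc (-2:ℤ) (n-1),
          ((n:ℝ) * (B2j n iX x - B2j n (iX+1) x)) * B2j n iY y * B2j n iZ z * φX iX iY iZ)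
      = ∑ iX ∈ Finset.Icc (-2:ℤ) (n-1), ∑ iY ∈ Finset.Icc (-2:ℤ) (n-1),
        ∑ iZ ∈ Finset.Icc (-2:ℤ) (n-1),
          B2j n iX x * B2j n iY y * B2j n iZ z
            * ((n:ℝ) * (φX iX iY iZ - φX (iX-1) iY iZ)) := by
    have step1 : (∑ iX ∈ Finset.Icc (-3:ℤ) (n-1), ∑ iY ∈ Finset.Icc (-2:ℤ) (n-1),
          ∑ iZ ∈ Finset.Icc (-2:ℤ) (n-1),
            ((n:ℝ) * (B2j n iX x - B2j n (iX+1) x)) * B2j n iY y * B2j n iZ z * φX iX iY iZ)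
        = ∑ iX ∈ Finset.Icc (-3:ℤ) (n-1), (B2j n iX x - B2j n (iX+1) x)
            * (∑ iY ∈ Finset.Icc (-2:ℤ) (n-1), ∑ iZ ∈ Finset.Icc (-2:ℤ) (n-1),
              (n:ℝ) * (B2j n iY y * B2j n iZ z * φX iX iY iZ)) := by
      refine Finset.sum_congr rfl fun iX _ => ?_
      rw [Finset.mul_sum]
      refine Finset.sum_congr rfl fun iY _ => ?_
      rw [Finset.mul_sum]
      exact Finset.sum_congr rfl fun iZ _ => by ring
    rw [step1, abel_sum n hn _ _ (B2j_neg3 hn0 hx.1) (B2j_n hn0 hx.2)]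
    refine Finset.sum_congr rfl fun iX _ => ?_
    rw [← Finset.sum_sub_distrib, Finset.mul_sum]
    refine Finset.sum_congr rfl fun iY _ => ?_
    rw [← Finset.sum_sub_distrib, Finset.mul_sum]
    exact Finset.sum_congr rfl fun iZ _ => by ring
  -- transform the Y-sum
  have tY : (∑ iX ∈ Finset.Icc (-2:ℤ) (n-1), ∑ iY ∈ Finset.Icc (-3:ℤ) (n-1),
        ∑ iZ ∈ Finset.Icc (-2:ℤ) (n-1),
          B2j n iX x * ((n:ℝ) * (B2j n iY y - B2j n (iY+1) y)) * B2j n iZ z * φY iX iY iZ)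
      = ∑ iX ∈ Finset.Icc (-2:ℤ) (n-1), ∑ iY ∈ Finset.Icc (-2:ℤ) (n-1),
        ∑ iZ ∈ Finset.Icc (-2:ℤ) (n-1),
          B2j n iX x * B2j n iY y * B2j n iZ z
            * ((n:ℝ) * (φY iX iY iZ - φY iX (iY-1) iZ)) := by
    refine Finset.sum_congr rfl fun iX _ => ?_
    have step1 : (∑ iY ∈ Finset.Icc (-3:ℤ) (n-1), ∑ iZ ∈ Finset.Icc (-2:ℤ) (n-1),
          B2j n iX x * ((n:ℝ) * (B2j n iY y - B2j n (iY+1) y)) * B2j n iZ z * φY iX iY iZ)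
        = ∑ iY ∈ Finset.Icc (-3:ℤ) (n-1), (B2j n iY y - B2j n (iY+1) y)
            * (∑ iZ ∈ Finset.Icc (-2:ℤ) (n-1),
              (n:ℝ) * (B2j n iX x * B2j n iZ z * φY iX iY iZ)) := by
      refine Finset.sum_congr rfl fun iY _ => ?_
      rw [Finset.mul_sum]
      exact Finset.sum_congr rfl fun iZ _ => by ring
    rw [step1, abel_sum n hn _ _ (B2j_neg3 hn0 hy.1) (B2j_n hn0 hy.2)]
    refine Finset.sum_congr rfl fun iY _ => ?_
    rw [← Finset.sum_sub_distrib, Finset.mul_sum]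
    exact Finset.sum_congr rfl fun iZ _ => by ring
  -- transform the Z-sum
  have tZ : (∑ iX ∈ Finset.Icc (-2:ℤ) (n-1), ∑ iY ∈ Finset.Icc (-2:ℤ) (n-1),
        ∑ iZ ∈ Finset.Icc (-3:ℤ) (n-1),
          B2j n iX x * B2j n iY y * ((n:ℝ) * (B2j n iZ z - B2j n (iZ+1) z)) * φZ iX iY iZ)
      = ∑ iX ∈ Finset.Icc (-2:ℤ) (n-1), ∑ iY ∈ Finset.Icc (-2:ℤ) (n-1),
        ∑ iZ ∈ Finset.Icc (-2:ℤ) (n-1),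
          B2j n iX x * B2j n iY y * B2j n iZ z
            * ((n:ℝ) * (φZ iX iY iZ - φZ iX iY (iZ-1))) := by
    refine Finset.sum_congr rfl fun iX _ => ?_
    refine Finset.sum_congr rfl fun iY _ => ?_
    have step1 : (∑ iZ ∈ Finset.Icc (-3:ℤ) (n-1),
          B2j n iX x * B2j n iY y * ((n:ℝ) * (B2j n iZ z - B2j n (iZ+1) z)) * φZ iX iY iZ)
        = ∑ iZ ∈ Finset.Icc (-3:ℤ) (n-1), (B2j n iZ z - B2j n (iZ+1) z)
            * ((n:ℝ) * (B2j n iX x * B2j n iY y * φZ iX iY iZ)) :=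
      Finset.sum_congr rfl fun iZ _ => by ring
    rw [step1, abel_sum n hn _ _ (B2j_neg3 hn0 hz.1) (B2j_n hn0 hz.2)]
    exact Finset.sum_congr rfl fun iZ _ => by ring
  rw [tX, tY, tZ, ← Finset.sum_add_distrib, ← Finset.sum_add_distrib]
  refine Finset.sum_eq_zero fun iX hiX => ?_
  rw [← Finset.sum_add_distrib, ← Finset.sum_add_distrib]
  refine Finset.sum_eq_zero fun iY hiY => ?_
  rw [← Finset.sum_add_distrib, ← Finset.sum_add_distrib]
  refine Finset.sum_eq_zero fun iZ hiZ => ?_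
  linear_combination (B2j n iX x * B2j n iY y * B2j n iZ z) * hcon iX iY iZ hiX hiY hiZ
end
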